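/- Let F be a finite field with gcd(n, q) = 1, q = |F|, λ ∈ F^×, and R = F[X]/⟨Xⁿ − λ⟩. If C is an R-submodule of R² = R × R, then there exist ideals C₁, C₂, C₁₂ of R with C₁ ∩ C₁₂ = C₂ ∩ C₁₂ = 0 and an element g which is a unit of the ring C₁₂ (with identity the idempotent generating C₁₂), such that C = (C₁ × C₂) ⊕ {(c, cg) : c ∈ C₁₂}. Conversely, any such data defines an R-submodule of R². -/

import Mathlib

open Polynomial

set_option synthInstance.maxHeartbeats 1000000

section Aux
variable {R : Type*} [CommRing R]

/-- Ideal direct summands are generated by idempotents. -/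
lemma aux_idem_gen (J K : Ideal R) (h : IsCompl J K) :
    ∃ e, e ∈ J ∧ e * e = e ∧ J = Ideal.span {e} := by
  have h1 : (1 : R) ∈ J ⊔ K := by rw [h.sup_eq_top]; trivial
  obtain ⟨e, he, f, hf, hef⟩ := Submodule.mem_sup.mp h1
  have hbot : J ⊓ K = ⊥ := h.inf_eq_bot
  have hprod : ∀ x ∈ J, x * f = 0 := fun x hx => by
    have : x * f ∈ J ⊓ K := ⟨J.mul_mem_right f hx, K.mul_mem_left x hf⟩
    simpa [hbot] using this
  have hxe : ∀ x ∈ J, x * e = x := fun x hx => by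
    have := hprod x hx
    have : x * (e + f) = x * e + x * f := mul_add x e f
    rw [hef, mul_one, hprod x hx, add_zero] at this
    exact this.symm
  refine ⟨e, he, hxe e he, le_antisymm (fun x hx => ?_) ?_⟩
  · rw [Ideal.mem_span_singleton]
    exact ⟨x, by rw [mul_comm, hxe x hx]⟩
  · rwa [Ideal.span_le, Set.singleton_subset_iff]

/-- Main structure theorem for submodules of `R × R`, `R` finite commutative semisimple. -/
lemma aux_decomp [Finite R] [IsSemisimpleRing R]
    (C : Submodule R (R × R)) :
    ∃ (C₁ C₂ C₁₂ : Ideal R) (e g g' : R),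
      C₁ ⊓ C₁₂ = ⊥ ∧ C₂ ⊓ C₁₂ = ⊥ ∧
      e * e = e ∧ C₁₂ = Ideal.span {e} ∧
      g ∈ C₁₂ ∧ g' ∈ C₁₂ ∧ g * g' = e ∧
      (∀ x : R × R, x ∈ C ↔ ∃ c₁ ∈ C₁, ∃ c₂ ∈ C₂, ∃ c ∈ C₁₂, x = (c₁ + c, c₂ + c * g)) := by
  classical
  set C₁ : Ideal R := C.comap (LinearMap.inl R R R) with hC₁def
  set C₂ : Ideal R := C.comap (LinearMap.inr R R R) with hC₂def
  set I : Ideal R := C.map (LinearMap.fst R R R) with hIdef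
  have hmemC₁ : ∀ a : R, a ∈ C₁ ↔ (a, 0) ∈ C := fun a => Iff.rfl
  have hmemC₂ : ∀ b : R, b ∈ C₂ ↔ ((0 : R), b) ∈ C := fun b => Iff.rfl
  have hC₁I : C₁ ≤ I := fun a ha => ⟨(a, 0), ha, rfl⟩
  obtain ⟨K, hK⟩ := exists_isCompl C₁
  set J : Ideal R := K ⊓ I with hJdef
  have hJI : J ≤ I := inf_le_right
  have hdisj : C₁ ⊓ J = ⊥ := by
    rw [eq_bot_iff]
    calc C₁ ⊓ (K ⊓ I) ≤ C₁ ⊓ K := inf_le_inf_left _ inf_le_left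
    _ = ⊥ := hK.inf_eq_bot
  have hsup : C₁ ⊔ J = I := by
    rw [hJdef, ← sup_inf_assoc_of_le K hC₁I, hK.sup_eq_top, top_inf_eq]
  obtain ⟨K', hK'⟩ := exists_isCompl J
  obtain ⟨e, heJ, hee, hJspan⟩ := aux_idem_gen J K' hK'
  have hce : ∀ c ∈ J, c * e = c := fun c hc => by
    rw [hJspan, Ideal.mem_span_singleton] at hc
    obtain ⟨d, rfl⟩ := hc
    rw [mul_assoc, mul_comm d e, ← mul_assoc, hee]
  -- pick the second coordinate over e
  obtain ⟨⟨a, b⟩, habC, hfst⟩ := hJI heJ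
  simp only [LinearMap.fst_apply] at hfst
  set g : R := e * b with hgdef
  have hgJ : g ∈ J := by
    have := J.mul_mem_left b heJ
    rwa [mul_comm] at this
  have heg : (e, g) ∈ C := by
    have := C.smul_mem e habC
    have heq : e • ((a, b) : R × R) = (e, g) := by
      rw [Prod.smul_mk, smul_eq_mul, smul_eq_mul, hfst, hee, hgdef]
    rwa [heq] at this
  have key : ∀ c ∈ J, (c, c * g) ∈ C := fun c hc => by
    have := C.smul_mem c heg
    have heq : c • ((e, g) : R × R) = (c, c * g) := by
      rw [Prod.smul_mk, smul_eq_mul, smul_eq_mul, hce c hc]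
    rwa [heq] at this
  -- injectivity of multiplication by g on J
  have hinj : ∀ d ∈ J, g * d = 0 → d = 0 := fun d hd hgd => by
    have h1 : (d, d * g) ∈ C := key d hd
    rw [mul_comm, hgd] at h1
    have : d ∈ C₁ ⊓ J := ⟨(hmemC₁ d).mpr h1, hd⟩
    simpa [hdisj] using this
  have hsurj : ∀ b ∈ J, ∃ u ∈ J, g * u = b := by
    set φ : J → J := fun x => ⟨g * x.1, J.mul_mem_left g x.2⟩ with hφ
    have hφinj : Function.Injective φ := by
      intro x y hxy
      have h1 : g * x.1 = g * y.1 := congrArg Subtype.val hxy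
      have h2 : g * (x.1 - y.1) = 0 := by rw [mul_sub, h1, sub_self]
      have := hinj _ (J.sub_mem x.2 y.2) h2
      exact Subtype.ext (sub_eq_zero.mp this)
    have hφsurj : Function.Surjective φ := Finite.injective_iff_surjective.mp hφinj
    intro b hb
    obtain ⟨u, hu⟩ := hφsurj ⟨b, hb⟩
    exact ⟨u.1, u.2, congrArg Subtype.val hu⟩
  obtain ⟨g', hg'J, hgg'⟩ := hsurj e heJ
  have hdisj₂ : C₂ ⊓ J = ⊥ := by
    rw [eq_bot_iff]
    rintro b ⟨hb2, hbJ⟩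
    obtain ⟨u, huJ, hgu⟩ := hsurj b hbJ
    have h1 : (u, u * g) ∈ C := key u huJ
    have h2 : ((0 : R), b) ∈ C := (hmemC₂ b).mp hb2
    have h3 : ((u, u * g) : R × R) - (0, b) = (u, 0) := by
      rw [Prod.mk_sub_mk, sub_zero, mul_comm, hgu, sub_self]
    have h4 : ((u, 0) : R × R) ∈ C := h3 ▸ C.sub_mem h1 h2
    have : u ∈ C₁ ⊓ J := ⟨(hmemC₁ u).mpr h4, huJ⟩
    rw [hdisj] at this
    simp only [Submodule.mem_bot] at this ⊢
    rw [← hgu, this, mul_zero]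
  refine ⟨C₁, C₂, J, e, g, g', hdisj, hdisj₂, hee, hJspan, hgJ, hg'J, hgg', fun x => ?_⟩
  constructor
  · intro hx
    have ha : x.1 ∈ C₁ ⊔ J := by
      rw [hsup]; exact ⟨x, hx, rfl⟩
    obtain ⟨c₁, hc₁, c, hc, hsum⟩ := Submodule.mem_sup.mp ha
    refine ⟨c₁, hc₁, x.2 - c * g, ?_, c, hc, ?_⟩
    · rw [hmemC₂]
      have h1 : x - (c₁, (0:R)) - (c, c * g) = ((0 : R), x.2 - c * g) := by
        have : x = (x.1, x.2) := rfl
        rw [this, Prod.mk_sub_mk, Prod.mk_sub_mk]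
        congr 1
        · rw [← hsum]; ring
        · ring
      exact h1 ▸ C.sub_mem (C.sub_mem hx ((hmemC₁ c₁).mp hc₁)) (key c hc)
    · have : x = (x.1, x.2) := rfl
      rw [this]
      congr 1
      · exact hsum.symm
      · ring
  · rintro ⟨c₁, h1, c₂, h2, c, hc, rfl⟩
    have : ((c₁ + c, c₂ + c * g) : R × R) = (c₁, 0) + (0, c₂) + (c, c * g) := by
      rw [Prod.mk_add_mk, Prod.mk_add_mk]; congr 1 <;> ring
    rw [this]
    exact C.add_mem (C.add_mem ((hmemC₁ c₁).mp h1) ((hmemC₂ c₂).mp h2)) (key c hc)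

/-- Converse direction: the set is a submodule. -/
lemma aux_conv (C₁ C₂ C₁₂ : Ideal R) (g : R) :
    ∃ D : Submodule R (R × R),
      ∀ x, x ∈ D ↔ ∃ c₁ ∈ C₁, ∃ c₂ ∈ C₂, ∃ c ∈ C₁₂, x = (c₁ + c, c₂ + c * g) := by
  classical
  set f : R →ₗ[R] R × R := LinearMap.prod LinearMap.id (LinearMap.toSpanSingleton R R g) with hf
  refine ⟨(Submodule.prod C₁ C₂) ⊔ Submodule.map f C₁₂, fun x => ?_⟩
  rw [Submodule.mem_sup]
  constructor
  · rintro ⟨y, hy, z, hz, rfl⟩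
    obtain ⟨c, hc, rfl⟩ := hz
    refine ⟨y.1, hy.1, y.2, hy.2, c, hc, ?_⟩
    have : f c = (c, c * g) := by
      simp [hf, LinearMap.toSpanSingleton_apply, smul_eq_mul]
    rw [this]
    rfl
  · rintro ⟨c₁, h1, c₂, h2, c, hc, rfl⟩
    refine ⟨(c₁, c₂), ⟨h1, h2⟩, f c, ⟨c, hc, rfl⟩, ?_⟩
    have : f c = (c, c * g) := by
      simp [hf, LinearMap.toSpanSingleton_apply, smul_eq_mul]
    rw [this, Prod.mk_add_mk]

end Aux

/-- The quotient ring `R_λ = F[X]/⟨Xⁿ − λ⟩`. -/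
abbrev Rlam (F : Type*) [Field F] (n : ℕ) (lam : F) :=
  F[X] ⧸ Ideal.span {(X : F[X]) ^ n - C lam}

theorem stmt_8 {F : Type*} [Field F] [Fintype F] {n : ℕ}
    (hn : Nat.gcd n (Fintype.card F) = 1) (lam : F) (hlam : lam ≠ 0) :
    (∀ C : Submodule (Rlam F n lam) (Rlam F n lam × Rlam F n lam),
      ∃ (C₁ C₂ C₁₂ : Ideal (Rlam F n lam)) (e g g' : Rlam F n lam),
        C₁ ⊓ C₁₂ = ⊥ ∧ C₂ ⊓ C₁₂ = ⊥ ∧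
        e * e = e ∧ C₁₂ = Ideal.span {e} ∧
        g ∈ C₁₂ ∧ g' ∈ C₁₂ ∧ g * g' = e ∧
        (∀ x : Rlam F n lam × Rlam F n lam,
          x ∈ C ↔ ∃ c₁ ∈ C₁, ∃ c₂ ∈ C₂, ∃ c ∈ C₁₂, x = (c₁ + c, c₂ + c * g))) ∧
    (∀ (C₁ C₂ C₁₂ : Ideal (Rlam F n lam)) (e g g' : Rlam F n lam),
      C₁ ⊓ C₁₂ = ⊥ → C₂ ⊓ C₁₂ = ⊥ →
      e * e = e → C₁₂ = Ideal.span {e} →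
      g ∈ C₁₂ → g' ∈ C₁₂ → g * g' = e →
      ∃ D : Submodule (Rlam F n lam) (Rlam F n lam × Rlam F n lam),
        ∀ x, x ∈ D ↔ ∃ c₁ ∈ C₁, ∃ c₂ ∈ C₂, ∃ c ∈ C₁₂, x = (c₁ + c, c₂ + c * g)) := by
  have hn0 : n ≠ 0 := by
    rintro rfl
    rw [Nat.gcd_zero_left] at hn
    have := Fintype.one_lt_card (α := F)
    omega
  have hnF : (n : F) ≠ 0 := by
    intro h
    set p := ringChar F with hp
    haveI : CharP F p := ringChar.charP F
    obtain ⟨m, hprime, hcard⟩ := FiniteField.card F p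
    have hdvdn : p ∣ n := (CharP.cast_eq_zero_iff F p n).mp h
    have hdvdq : p ∣ Fintype.card F := hcard ▸ dvd_pow_self p m.2.ne'
    have := Nat.dvd_gcd hdvdn hdvdq
    rw [hn] at this
    exact hprime.one_lt.ne' (Nat.eq_one_of_dvd_one this)
  set f : F[X] := X ^ n - C lam with hf
  have hmonic : f.Monic := monic_X_pow_sub_C lam hn0
  have hsep : f.Separable := separable_X_pow_sub_C lam hnF hlam
  have hsq : Squarefree f := hsep.squarefree
  haveI hred : IsReduced (Rlam F n lam) :=
    (Ideal.isRadical_iff_quotient_reduced _).mp (isRadical_iff_span_singleton.mp hsq.isRadical)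
  haveI hfinmod : Module.Finite F (AdjoinRoot f) :=
    Module.Finite.of_basis (AdjoinRoot.powerBasis' hmonic).basis
  haveI hfin : Finite (Rlam F n lam) := (Module.finite_iff_finite (R := F) (M := AdjoinRoot f)).mp hfinmod
  haveI : IsArtinianRing (Rlam F n lam) := isArtinian_of_finite
  haveI : IsSemisimpleRing (Rlam F n lam) :=
    IsArtinianRing.isSemisimpleRing_of_isReduced (Rlam F n lam)
  exact ⟨fun C => aux_decomp C, fun C₁ C₂ C₁₂ e g g' _ _ _ _ _ _ _ => aux_conv C₁ C₂ C₁₂ g⟩
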